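/- Let U ⊆ ℝⁿ be open, let π be a Poisson tensor on U, let W ⊆ U × ℝⁿ be open, and let α, β: W → U be smooth maps such that: α is a Poisson map from (W, Π_can) to (U, π); β is an anti-Poisson map from (W, Π_can) to (U, π); and {F∘α, G∘β}_can = 0 on W for all smooth F, G: U → ℝ. Let S: U → ℝ be a smooth function such that σ(x) := (x, ∇S(x)) lies in W for all x ∈ U and such that a := α∘σ and b := β∘σ are diffeomorphisms of U onto U. Then the map φ := b ∘ a⁻¹ : U → U is a Poisson diffeomorphism of (U, π), i.e. {F∘φ, G∘φ}_π = {F,G}_π ∘ φ for all smooth F,G: U → ℝ. -/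

import Mathlib

open Matrix
open scoped BigOperators

/-- Partial derivative `∂f/∂x_i` of a function on `ℝⁿ`. -/
noncomputable def pd {n : ℕ} (f : (Fin n → ℝ) → ℝ) (i : Fin n) (x : Fin n → ℝ) : ℝ :=
  fderiv ℝ f x (Pi.single i 1)

/-- Gradient of a function on `ℝⁿ`. -/
noncomputable def grad {n : ℕ} (f : (Fin n → ℝ) → ℝ) (x : Fin n → ℝ) : Fin n → ℝ :=
  fun i => pd f i x

/-- The bracket `{f,g}(x) = (∇f(x))ᵀ π(x) ∇g(x)` of a matrix-valued map `π`. -/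
noncomputable def bracket {n : ℕ} (π : (Fin n → ℝ) → Matrix (Fin n) (Fin n) ℝ)
    (f g : (Fin n → ℝ) → ℝ) (x : Fin n → ℝ) : ℝ :=
  ∑ i, ∑ j, π x i j * pd f i x * pd g j x

/-- Partial derivative in the `i`-th base direction `x_i` on `ℝⁿ × ℝⁿ`. -/
noncomputable def pdx {n : ℕ} (F : (Fin n → ℝ) × (Fin n → ℝ) → ℝ) (i : Fin n)
    (z : (Fin n → ℝ) × (Fin n → ℝ)) : ℝ :=
  fderiv ℝ F z (Pi.single i 1, 0)

/-- Partial derivative in the `i`-th fiber direction `p_i` on `ℝⁿ × ℝⁿ`. -/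
noncomputable def pdp {n : ℕ} (F : (Fin n → ℝ) × (Fin n → ℝ) → ℝ) (i : Fin n)
    (z : (Fin n → ℝ) × (Fin n → ℝ)) : ℝ :=
  fderiv ℝ F z (0, Pi.single i 1)

/-- Canonical Poisson bracket on `ℝⁿ × ℝⁿ`:
`{F,G}(x,p) = ∑ᵢ (∂F/∂xᵢ ∂G/∂pᵢ − ∂F/∂pᵢ ∂G/∂xᵢ)`. -/
noncomputable def canBracket {n : ℕ} (F G : (Fin n → ℝ) × (Fin n → ℝ) → ℝ)
    (z : (Fin n → ℝ) × (Fin n → ℝ)) : ℝ :=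
  ∑ i, (pdx F i z * pdp G i z - pdp F i z * pdx G i z)

/-- A Poisson tensor on an open set `U ⊆ ℝⁿ`. -/
def IsPoissonTensor {n : ℕ} (π : (Fin n → ℝ) → Matrix (Fin n) (Fin n) ℝ)
    (U : Set (Fin n → ℝ)) : Prop :=
  (∀ x ∈ U, (π x)ᵀ = -π x) ∧
  ∀ i j k : Fin n, ∀ x ∈ U,
    ∑ a, (pd (fun y => π y i j) a x * π x a k
        + pd (fun y => π y j k) a x * π x a i
        + pd (fun y => π y k i) a x * π x a j) = 0

set_option maxHeartbeats 1000000 in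
theorem key_matrix {n : ℕ} (Ax Ap Bx Bp H A' P Q : Matrix (Fin n) (Fin n) ℝ)
    (hH : Hᵀ = H)
    (hAB : Ax * Bpᵀ = Ap * Bxᵀ)
    (hP : Ax * Apᵀ - Ap * Axᵀ = P)
    (hQ : Bx * Bpᵀ - Bp * Bxᵀ = -Q)
    (h1 : A' * (Ax + Ap * H) = 1) :
    ((Bx + Bp * H) * A') * P * ((Bx + Bp * H) * A')ᵀ = Q := by
  set Da := Ax + Ap * H with hDa
  set Db := Bx + Bp * H with hDb
  set M := Db * A' with hM
  have hDbT : Dbᵀ = Bxᵀ + H * Bpᵀ := by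
    rw [hDb, transpose_add, transpose_mul, hH]
  have hDaT : Daᵀ = Axᵀ + H * Apᵀ := by
    rw [hDa, transpose_add, transpose_mul, hH]
  have k1 : Ap * Dbᵀ = Da * Bpᵀ := by
    rw [hDbT, hDa, mul_add, add_mul, hAB, mul_assoc]
  have hED : M * Da = Db := by rw [hM, mul_assoc, h1, mul_one]
  have k2 : M * Ap * Dbᵀ = Db * Bpᵀ := by
    rw [mul_assoc, k1, hM, mul_assoc Db, ← mul_assoc A', h1, one_mul]
  have hPalt : P = Da * Apᵀ - Ap * Daᵀ := by
    rw [← hP, hDaT, hDa, add_mul, mul_add, mul_assoc]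
    abel
  have expand : M * P * Mᵀ = (M * Da) * (Apᵀ * Mᵀ) - (M * Ap) * (Daᵀ * Mᵀ) := by
    rw [hPalt, mul_sub, sub_mul, ← mul_assoc, ← mul_assoc, mul_assoc (M*Da),
        mul_assoc (M*Ap)]
  have hDaTM : Daᵀ * Mᵀ = Dbᵀ := by
    rw [← transpose_mul, hED]
  have ht : (Db * Bpᵀ)ᵀ = Db * (Apᵀ * Mᵀ) := by
    rw [← k2, transpose_mul, transpose_mul, transpose_transpose]
  have final : M * P * Mᵀ = (Db * Bpᵀ)ᵀ - Db * Bpᵀ := by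
    rw [expand, hED, hDaTM, k2, ht]
  rw [final, transpose_mul, transpose_transpose, hDbT, hDb]
  have : Bp * (Bxᵀ + H * Bpᵀ) - (Bx + Bp * H) * Bpᵀ = -(Bx * Bpᵀ - Bp * Bxᵀ) := by
    rw [mul_add, add_mul, mul_assoc]; abel
  rw [this, hQ, neg_neg]

lemma clm_sum {n : ℕ} (L : (Fin n → ℝ) →L[ℝ] ℝ) (v : Fin n → ℝ) :
    L v = ∑ k, L (Pi.single k 1) * v k := by
  have hv : v = ∑ k, v k • (Pi.single k (1:ℝ) : Fin n → ℝ) := by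
    funext j
    simp [Pi.single_apply, Finset.sum_apply]
  conv_lhs => rw [hv]
  rw [map_sum]
  refine Finset.sum_congr rfl fun k _ => ?_
  rw [_root_.map_smul, smul_eq_mul, mul_comm]

lemma clm_sum2 {n : ℕ} (L : ((Fin n → ℝ) × (Fin n → ℝ)) →L[ℝ] ℝ) (u w : Fin n → ℝ) :
    L (u, w) = ∑ k, L (Pi.single k 1, 0) * u k + ∑ k, L (0, Pi.single k 1) * w k := by
  have h : (u, w) = (∑ k, u k • ((Pi.single k 1, 0) : (Fin n → ℝ) × (Fin n → ℝ)))
      + (∑ k, w k • ((0, Pi.single k 1) : (Fin n → ℝ) × (Fin n → ℝ))) := by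
    ext j <;> simp [Prod.fst_sum, Prod.snd_sum, Prod.smul_mk, Finset.sum_apply, Pi.single_apply]
  rw [h, map_add, map_sum, map_sum]
  congr 1 <;> refine Finset.sum_congr rfl fun k _ => ?_ <;>
    rw [_root_.map_smul, smul_eq_mul, mul_comm]

lemma fderiv_coord_apply {n : ℕ} {g : (Fin n → ℝ) → (Fin n → ℝ)} {x : Fin n → ℝ}
    (hg : DifferentiableAt ℝ g x) (k : Fin n) (v : Fin n → ℝ) :
    fderiv ℝ g x v k = fderiv ℝ (fun y => g y k) x v := by
  have h : (fun y => g y k)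
      = (ContinuousLinearMap.proj (R := ℝ) (φ := fun _ : Fin n => ℝ) k) ∘ g := rfl
  rw [h, fderiv_comp x (ContinuousLinearMap.proj k).differentiableAt hg,
    ContinuousLinearMap.fderiv]
  rfl

lemma pd_comp {n : ℕ} {f : (Fin n → ℝ) → ℝ} {g : (Fin n → ℝ) → (Fin n → ℝ)} {x : Fin n → ℝ}
    (hf : DifferentiableAt ℝ f (g x)) (hg : DifferentiableAt ℝ g x) (i : Fin n) :
    pd (f ∘ g) i x = ∑ k, pd f k (g x) * pd (fun y => g y k) i x := by
  unfold pd
  rw [fderiv_comp x hf hg]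
  simp only [ContinuousLinearMap.coe_comp', Function.comp_apply]
  rw [clm_sum]
  refine Finset.sum_congr rfl fun k _ => ?_
  rw [fderiv_coord_apply hg]

lemma pd_comp_graph {n : ℕ} {F : (Fin n → ℝ) × (Fin n → ℝ) → ℝ} {g : (Fin n → ℝ) → (Fin n → ℝ)}
    {x : Fin n → ℝ} (hF : DifferentiableAt ℝ F (x, g x)) (hg : DifferentiableAt ℝ g x)
    (i : Fin n) :
    pd (fun y => F (y, g y)) i x
      = pdx F i (x, g x) + ∑ k, pdp F k (x, g x) * pd (fun y => g y k) i x := by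
  have hσ : HasFDerivAt (fun y : Fin n → ℝ => (y, g y))
      ((ContinuousLinearMap.id ℝ (Fin n → ℝ)).prod (fderiv ℝ g x)) x :=
    (hasFDerivAt_id x).prodMk hg.hasFDerivAt
  have hc : HasFDerivAt (fun y => F (y, g y))
      ((fderiv ℝ F (x, g x)).comp
        ((ContinuousLinearMap.id ℝ (Fin n → ℝ)).prod (fderiv ℝ g x))) x :=
    hF.hasFDerivAt.comp x hσ
  unfold pd pdx pdp
  rw [hc.fderiv]
  simp only [ContinuousLinearMap.coe_comp', Function.comp_apply,
    ContinuousLinearMap.prod_apply, ContinuousLinearMap.coe_id', id_eq]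
  rw [clm_sum2]
  congr 1
  · rw [Finset.sum_eq_single i]
    · simp [Pi.single_apply]
    · intro k _ hk
      simp [Pi.single_apply, hk]
    · intro h; exact absurd (Finset.mem_univ i) h
  · refine Finset.sum_congr rfl fun k _ => ?_
    rw [fderiv_coord_apply hg]

lemma pd_congr {n : ℕ} {f g : (Fin n → ℝ) → ℝ} {x : Fin n → ℝ} (h : f =ᶠ[nhds x] g)
    (i : Fin n) : pd f i x = pd g i x := by
  unfold pd; rw [h.fderiv_eq]

lemma pd_coord {n : ℕ} (i j : Fin n) (x : Fin n → ℝ) :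
    pd (fun v => v i) j x = if i = j then 1 else 0 := by
  unfold pd
  rw [show (fun v : Fin n → ℝ => v i)
      = ⇑(ContinuousLinearMap.proj (R := ℝ) (φ := fun _ : Fin n => ℝ) i) from rfl,
    ContinuousLinearMap.fderiv]
  simp [Pi.single_apply, eq_comm]

lemma quad_eq {n : ℕ} (P : Matrix (Fin n) (Fin n) ℝ) (a b : Fin n → ℝ) :
    ∑ i, ∑ j, P i j * a i * b j = a ⬝ᵥ P.mulVec b := by
  simp only [dotProduct, Matrix.mulVec, Finset.mul_sum]
  refine Finset.sum_congr rfl fun i _ => Finset.sum_congr rfl fun j _ => ?_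
  ring

lemma quad_transform {n : ℕ} (P Q M : Matrix (Fin n) (Fin n) ℝ) (u v : Fin n → ℝ)
    (h : M * P * Mᵀ = Q) :
    ∑ i, ∑ j, P i j * (∑ s, u s * M s i) * (∑ t, v t * M t j)
      = ∑ s, ∑ t, Q s t * u s * v t := by
  have hu : ∀ i, (∑ s, u s * M s i) = (u ᵥ* M) i := by
    intro i; simp [Matrix.vecMul, dotProduct]
  have hv : ∀ j, (∑ t, v t * M t j) = (v ᵥ* M) j := by
    intro j; simp [Matrix.vecMul, dotProduct]
  calc ∑ i, ∑ j, P i j * (∑ s, u s * M s i) * (∑ t, v t * M t j)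
      = ∑ i, ∑ j, P i j * (u ᵥ* M) i * (v ᵥ* M) j := by
        refine Finset.sum_congr rfl fun i _ => Finset.sum_congr rfl fun j _ => by
          rw [hu, hv]
    _ = (u ᵥ* M) ⬝ᵥ P.mulVec (v ᵥ* M) := quad_eq _ _ _
    _ = (u ᵥ* M) ⬝ᵥ (P * Mᵀ).mulVec v := by
        rw [← Matrix.mulVec_transpose M v, Matrix.mulVec_mulVec]
    _ = u ⬝ᵥ (M * (P * Mᵀ)).mulVec v := by
        conv_rhs => rw [← Matrix.mulVec_mulVec, Matrix.dotProduct_mulVec]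
    _ = u ⬝ᵥ Q.mulVec v := by rw [← Matrix.mul_assoc, h]
    _ = ∑ s, ∑ t, Q s t * u s * v t := (quad_eq Q u v).symm

set_option maxHeartbeats 2000000 in
/-- Given a bi-realisation `(W, α, β)` of `(U, π)` and a smooth
function `S` whose differential graph `σ(x) = (x, ∇S(x))` is a bisection (i.e.
`a = α∘σ` and `b = β∘σ` are diffeomorphisms of `U` onto `U`), the induced map
`φ = b ∘ a⁻¹` is a Poisson diffeomorphism of `(U, π)`. -/
theorem bisection_induces_poisson_diffeo
    {n : ℕ} (U : Set (Fin n → ℝ)) (hU : IsOpen U)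
    (π : (Fin n → ℝ) → Matrix (Fin n) (Fin n) ℝ)
    (hπsmooth : ∀ i j, ContDiffOn ℝ (⊤ : ℕ∞) (fun x => π x i j) U)
    (hπ : IsPoissonTensor π U)
    (W : Set ((Fin n → ℝ) × (Fin n → ℝ))) (hW : IsOpen W)
    (hWU : W ⊆ U ×ˢ Set.univ)
    (α β : (Fin n → ℝ) × (Fin n → ℝ) → (Fin n → ℝ))
    (hα : ContDiffOn ℝ (⊤ : ℕ∞) α W) (hβ : ContDiffOn ℝ (⊤ : ℕ∞) β W)
    (hαU : Set.MapsTo α W U) (hβU : Set.MapsTo β W U)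
    -- `α` is a Poisson map
    (hαP : ∀ F G : (Fin n → ℝ) → ℝ,
      ContDiffOn ℝ (⊤ : ℕ∞) F U → ContDiffOn ℝ (⊤ : ℕ∞) G U →
      ∀ w ∈ W, canBracket (F ∘ α) (G ∘ α) w = bracket π F G (α w))
    -- `β` is an anti-Poisson map
    (hβP : ∀ F G : (Fin n → ℝ) → ℝ,
      ContDiffOn ℝ (⊤ : ℕ∞) F U → ContDiffOn ℝ (⊤ : ℕ∞) G U →
      ∀ w ∈ W, canBracket (F ∘ β) (G ∘ β) w = -bracket π F G (β w))
    -- the fibers of `α` and `β` are symplectically orthogonal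
    (hαβ : ∀ F G : (Fin n → ℝ) → ℝ,
      ContDiffOn ℝ (⊤ : ℕ∞) F U → ContDiffOn ℝ (⊤ : ℕ∞) G U →
      ∀ w ∈ W, canBracket (F ∘ α) (G ∘ β) w = 0)
    (S : (Fin n → ℝ) → ℝ) (hS : ContDiffOn ℝ (⊤ : ℕ∞) S U)
    (hσ : ∀ x ∈ U, (x, grad S x) ∈ W)
    -- `a := α ∘ σ` and `b := β ∘ σ` are diffeomorphisms of `U` onto `U`
    (a b ainv binv : (Fin n → ℝ) → (Fin n → ℝ))
    (ha : ∀ x, a x = α (x, grad S x)) (hb : ∀ x, b x = β (x, grad S x))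
    (haU : Set.MapsTo a U U) (hbU : Set.MapsTo b U U)
    (hainvU : Set.MapsTo ainv U U) (hbinvU : Set.MapsTo binv U U)
    (hainv : ContDiffOn ℝ (⊤ : ℕ∞) ainv U) (hbinv : ContDiffOn ℝ (⊤ : ℕ∞) binv U)
    (haainv : ∀ x ∈ U, ainv (a x) = x) (hainva : ∀ x ∈ U, a (ainv x) = x)
    (hbbinv : ∀ x ∈ U, binv (b x) = x) (hbinvb : ∀ x ∈ U, b (binv x) = x) :
    ∀ F G : (Fin n → ℝ) → ℝ,
      ContDiffOn ℝ (⊤ : ℕ∞) F U → ContDiffOn ℝ (⊤ : ℕ∞) G U →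
      ∀ x ∈ U,
        bracket π (F ∘ b ∘ ainv) (G ∘ b ∘ ainv) x = bracket π F G (b (ainv x)) := by
  intro F G hF hG x₀ hx₀
  have hyU : ainv x₀ ∈ U := hainvU hx₀
  set y : Fin n → ℝ := ainv x₀ with hydef
  have hzW : (y, grad S y) ∈ W := hσ y hyU
  have hay : a y = x₀ := hainva x₀ hx₀
  have hαz : α (y, grad S y) = x₀ := by rw [← ha y]; exact hay
  have hβz : β (y, grad S y) = b y := (hb y).symm
  have hbyU : b y ∈ U := hbU hyU
  -- differentiability of α, β at z
  have hαat : DifferentiableAt ℝ α (y, grad S y) :=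
    (hα.contDiffAt (hW.mem_nhds hzW)).differentiableAt (by simp)
  have hβat : DifferentiableAt ℝ β (y, grad S y) :=
    (hβ.contDiffAt (hW.mem_nhds hzW)).differentiableAt (by simp)
  have hαc : ∀ i, DifferentiableAt ℝ (fun w => α w i) (y, grad S y) :=
    fun i => differentiableAt_pi.mp hαat i
  have hβc : ∀ i, DifferentiableAt ℝ (fun w => β w i) (y, grad S y) :=
    fun i => differentiableAt_pi.mp hβat i
  -- grad S
  have hSat : ContDiffAt ℝ (⊤ : ℕ∞) S y := hS.contDiffAt (hU.mem_nhds hyU)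
  have hf' : ContDiffAt ℝ (⊤ : ℕ∞) (fderiv ℝ S) y :=
    hSat.fderiv_right (by exact_mod_cast le_top)
  have hf'd : DifferentiableAt ℝ (fderiv ℝ S) y :=
    hf'.differentiableAt (by simp)
  have hgd : DifferentiableAt ℝ (grad S) y := by
    refine differentiableAt_pi.mpr fun k => ?_
    have := ((ContinuousLinearMap.apply ℝ ℝ (Pi.single k (1:ℝ) : Fin n → ℝ)).differentiableAt).comp y hf'd
    exact this
  -- the matrices
  set Ax : Matrix (Fin n) (Fin n) ℝ :=
    Matrix.of fun i j => pdx (fun w => α w i) j (y, grad S y) with hAx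
  set Ap : Matrix (Fin n) (Fin n) ℝ :=
    Matrix.of fun i j => pdp (fun w => α w i) j (y, grad S y) with hAp
  set Bx : Matrix (Fin n) (Fin n) ℝ :=
    Matrix.of fun i j => pdx (fun w => β w i) j (y, grad S y) with hBx
  set Bp : Matrix (Fin n) (Fin n) ℝ :=
    Matrix.of fun i j => pdp (fun w => β w i) j (y, grad S y) with hBp
  set Hm : Matrix (Fin n) (Fin n) ℝ :=
    Matrix.of fun k j => pd (fun v => grad S v k) j y with hHm
  set A' : Matrix (Fin n) (Fin n) ℝ :=
    Matrix.of fun i j => pd (fun v => ainv v i) j x₀ with hA'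
  -- symmetry of the Hessian
  have heval : ∀ u w : Fin n → ℝ,
      fderiv ℝ (fun t => fderiv ℝ S t u) y w = (fderiv ℝ (fderiv ℝ S) y w) u := by
    intro u w
    have h : (fun t => fderiv ℝ S t u) = ⇑(ContinuousLinearMap.apply ℝ ℝ u) ∘ (fderiv ℝ S) :=
      rfl
    rw [h, fderiv_comp y (ContinuousLinearMap.apply ℝ ℝ u).differentiableAt hf'd,
      ContinuousLinearMap.fderiv]
    rfl
  have hsymm2 : IsSymmSndFDerivAt ℝ S y := hSat.isSymmSndFDerivAt (by rw [minSmoothness_of_isRCLikeNormedField]; exact WithTop.coe_le_coe.mpr (le_top : (2:ℕ∞) ≤ ⊤))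
  have hHsym : Hmᵀ = Hm := by
    ext k j
    simp only [Matrix.transpose_apply, hHm, Matrix.of_apply]
    have e1 : pd (fun v => grad S v k) j y
        = (fderiv ℝ (fderiv ℝ S) y (Pi.single j 1)) (Pi.single k 1) := heval _ _
    have e2 : pd (fun v => grad S v j) k y
        = (fderiv ℝ (fderiv ℝ S) y (Pi.single k 1)) (Pi.single j 1) := heval _ _
    rw [e1, e2, hsymm2]
  -- Jacobians of a and b at y
  have hDa : ∀ i j, pd (fun v => a v i) j y = (Ax + Ap * Hm) i j := by
    intro i j
    have hfun : (fun v => a v i) = (fun v => (fun w => α w i) (v, grad S v)) := by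
      funext v; rw [ha v]
    rw [hfun, pd_comp_graph (hαc i) hgd j]
    simp only [Matrix.add_apply, Matrix.mul_apply, hAx, hAp, hHm, Matrix.of_apply]
  have hDb : ∀ i j, pd (fun v => b v i) j y = (Bx + Bp * Hm) i j := by
    intro i j
    have hfun : (fun v => b v i) = (fun v => (fun w => β w i) (v, grad S v)) := by
      funext v; rw [hb v]
    rw [hfun, pd_comp_graph (hβc i) hgd j]
    simp only [Matrix.add_apply, Matrix.mul_apply, hBx, hBp, hHm, Matrix.of_apply]
  -- the structure matrices
  have hcoord : ∀ i : Fin n, ContDiffOn ℝ (⊤ : ℕ∞) (fun v : Fin n → ℝ => v i) U := fun i =>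
    (ContinuousLinearMap.proj (R := ℝ) (φ := fun _ : Fin n => ℝ) i).contDiff.contDiffOn
  have hbrval : ∀ (i j : Fin n) (x : Fin n → ℝ),
      bracket π (fun v => v i) (fun v => v j) x = π x i j := by
    intro i j x
    unfold bracket
    simp [pd_coord, Finset.sum_ite_eq, mul_ite, ite_mul]
  have hA : Ax * Apᵀ - Ap * Axᵀ = π x₀ := by
    ext i j
    have h := hαP (fun v => v i) (fun v => v j) (hcoord i) (hcoord j) (y, grad S y) hzW
    rw [hαz, hbrval] at h
    unfold canBracket at h
    simp only [Function.comp_def] at h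
    simp only [Matrix.sub_apply, Matrix.mul_apply, Matrix.transpose_apply, hAx, hAp,
      Matrix.of_apply, ← Finset.sum_sub_distrib]
    exact h
  have hB : Bx * Bpᵀ - Bp * Bxᵀ = -(π (b y)) := by
    ext i j
    have h := hβP (fun v => v i) (fun v => v j) (hcoord i) (hcoord j) (y, grad S y) hzW
    rw [hβz, hbrval] at h
    unfold canBracket at h
    simp only [Function.comp_def] at h
    simp only [Matrix.sub_apply, Matrix.mul_apply, Matrix.transpose_apply, Matrix.neg_apply,
      hBx, hBp, Matrix.of_apply, ← Finset.sum_sub_distrib]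
    exact h
  have hAB : Ax * Bpᵀ = Ap * Bxᵀ := by
    ext i j
    have h := hαβ (fun v => v i) (fun v => v j) (hcoord i) (hcoord j) (y, grad S y) hzW
    unfold canBracket at h
    simp only [Function.comp_def] at h
    rw [Finset.sum_sub_distrib] at h
    have h' := sub_eq_zero.mp h
    simp only [Matrix.mul_apply, Matrix.transpose_apply, hAx, hAp, hBx, hBp, Matrix.of_apply]
    exact h'
  -- differentiability of a, b, ainv
  have had : DifferentiableAt ℝ a y := by
    have hfun : a = fun v => α (v, grad S v) := funext ha
    rw [hfun]
    exact hαat.comp y (differentiableAt_id.prodMk hgd)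
  have hbd : DifferentiableAt ℝ b y := by
    have hfun : b = fun v => β (v, grad S v) := funext hb
    rw [hfun]
    exact hβat.comp y (differentiableAt_id.prodMk hgd)
  have hainvd : DifferentiableAt ℝ ainv x₀ :=
    (hainv.contDiffAt (hU.mem_nhds hx₀)).differentiableAt (by simp)
  have hainvc : ∀ s, DifferentiableAt ℝ (fun v => ainv v s) x₀ :=
    fun s => differentiableAt_pi.mp hainvd s
  -- A' is a left inverse of Da
  have hA'Da : A' * (Ax + Ap * Hm) = 1 := by
    ext s j
    have h1 : pd ((fun v => ainv v s) ∘ a) j y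
        = ∑ t, pd (fun v => ainv v s) t (a y) * pd (fun v => a v t) j y :=
      pd_comp (by rw [hay]; exact hainvc s) had j
    have h2 : pd ((fun v => ainv v s) ∘ a) j y = pd (fun v => v s) j y := by
      apply pd_congr
      filter_upwards [hU.mem_nhds hyU] with v hv
      exact congrFun (haainv v hv) s
    have h3 : ∑ t, A' s t * (Ax + Ap * Hm) t j
        = ∑ t, pd (fun v => ainv v s) t (a y) * pd (fun v => a v t) j y := by
      refine Finset.sum_congr rfl fun t _ => ?_
      rw [← hDa t j, hay]
      simp only [hA', Matrix.of_apply]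
    rw [Matrix.mul_apply, h3, ← h1, h2, pd_coord, Matrix.one_apply]
  -- key matrix identity
  have hkey : ((Bx + Bp * Hm) * A') * (π x₀) * ((Bx + Bp * Hm) * A')ᵀ = π (b y) :=
    key_matrix Ax Ap Bx Bp Hm A' (π x₀) (π (b y)) hHsym hAB hA hB hA'Da
  -- Jacobian of b ∘ ainv at x₀
  have hbad : DifferentiableAt ℝ (b ∘ ainv) x₀ := hbd.comp x₀ hainvd
  have hM : ∀ t j, pd (fun v => (b ∘ ainv) v t) j x₀ = ((Bx + Bp * Hm) * A') t j := by
    intro t j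
    have h1 : pd ((fun v => b v t) ∘ ainv) j x₀
        = ∑ s, pd (fun v => b v t) s (ainv x₀) * pd (fun v => ainv v s) j x₀ :=
      pd_comp (differentiableAt_pi.mp hbd t) hainvd j
    have h2 : ∑ s, pd (fun v => b v t) s (ainv x₀) * pd (fun v => ainv v s) j x₀
        = ((Bx + Bp * Hm) * A') t j := by
      rw [Matrix.mul_apply]
      refine Finset.sum_congr rfl fun s _ => ?_
      rw [← hydef, hDb t s]
      simp only [hA', Matrix.of_apply]
    rw [← h2]
    exact h1
  have hFd : DifferentiableAt ℝ F (b y) :=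
    (hF.contDiffAt (hU.mem_nhds hbyU)).differentiableAt (by simp)
  have hGd : DifferentiableAt ℝ G (b y) :=
    (hG.contDiffAt (hU.mem_nhds hbyU)).differentiableAt (by simp)
  have hpdF : ∀ i, pd (F ∘ (b ∘ ainv)) i x₀
      = ∑ s, pd F s (b y) * ((Bx + Bp * Hm) * A') s i := by
    intro i
    rw [pd_comp (f := F) (g := b ∘ ainv) (x := x₀) hFd hbad i]
    exact Finset.sum_congr rfl fun s _ => by rw [hM s i]; rfl
  have hpdG : ∀ j, pd (G ∘ (b ∘ ainv)) j x₀
      = ∑ t, pd G t (b y) * ((Bx + Bp * Hm) * A') t j := by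
    intro j
    rw [pd_comp (f := G) (g := b ∘ ainv) (x := x₀) hGd hbad j]
    exact Finset.sum_congr rfl fun t _ => by rw [hM t j]; rfl
  -- conclusion
  show bracket π (F ∘ (b ∘ ainv)) (G ∘ (b ∘ ainv)) x₀ = bracket π F G (b y)
  unfold bracket
  calc ∑ i, ∑ j, π x₀ i j * pd (F ∘ (b ∘ ainv)) i x₀ * pd (G ∘ (b ∘ ainv)) j x₀
      = ∑ i, ∑ j, π x₀ i j * (∑ s, pd F s (b y) * ((Bx + Bp * Hm) * A') s i)
          * (∑ t, pd G t (b y) * ((Bx + Bp * Hm) * A') t j) := by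
        refine Finset.sum_congr rfl fun i _ => Finset.sum_congr rfl fun j _ => ?_
        rw [hpdF i, hpdG j]
    _ = ∑ s, ∑ t, π (b y) s t * pd F s (b y) * pd G t (b y) :=
        quad_transform (π x₀) (π (b y)) ((Bx + Bp * Hm) * A')
          (fun s => pd F s (b y)) (fun t => pd G t (b y)) hkey
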